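/- Let (N, Ñ, M, M̃, X, X̃, Y, Ỹ) be a doubly coprime factorization over RH∞ of G ∈ ℝ(s)^{p×m}, let 𝒳 ∈ {0,1}^{m×p} and let Ŷ ∈ {0,1}^{m×m} with all diagonal entries of Ŷ equal to 1. Define F_𝒳 := I_{mp} − diag(𝒳) and F_Ŷ := I_{m²} − diag(Ŷ). Suppose there exist stable Q₀, Q̂ ∈ ℝ(s)^{m×p} such that: (i) F_𝒳((M̃ᵀ ⊗ I_m)·vec(Q₀) + vec(X̃)) = 0 and F_Ŷ((Ñᵀ ⊗ I_m)·vec(Q₀) + vec(Ỹ)) = 0; (ii) F_𝒳(M̃ᵀ ⊗ I_m)·vec(Q̂) = 0 and F_Ŷ(Ñᵀ ⊗ I_m)·vec(Q̂) = 0; and, with Q := Q₀ + Q̂, V := Ỹ + QÑ and W := X̃ + QM̃: (iii) det(V(∞)) ≠ 0; (iv) det(V^diag(∞)) ≠ 0. Then det V ≢ 0 and det(V^diag) ≢ 0, and the rational matrices Φ := I_m − (V^diag)^{−1}V and Γ := (V^diag)^{−1}W satisfy: Φ and Γ are proper, Γ ∈ Ŝ_𝒳, Φ ∈ Ŝ_{Ŷ−I}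 (so all diagonal entries of Φ are zero), det(I_m − Φ) ≢ 0, and (I_m − Φ)^{−1}Γ = V^{−1}W, i.e. the controller K = (Ỹ + QÑ)^{−1}(X̃ + QM̃) admits the network realization function implementation (Φ, Γ) with the prescribed sparsity. -/

import Mathlib

open Matrix Polynomial
open scoped Kronecker

set_option synthInstance.maxHeartbeats 400000
set_option maxHeartbeats 1000000

noncomputable section

/-- The field ℝ(s) of real rational functions. -/
abbrev RF := RatFunc ℝ

/-- A rational function is proper if the degree of its numerator (in lowest terms)
is at most the degree of its denominator. -/
def RFproper (f : RF) : Prop := f.num.degree ≤ f.denom.degree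

/-- A rational function is stable: proper and every complex root of its denominator
has strictly negative real part. -/
def RFstable (f : RF) : Prop :=
  RFproper f ∧ ∀ z : ℂ, Polynomial.aeval z f.denom = 0 → z.re < 0

/-- A rational matrix is stable (lies in RH∞) iff every entry is stable. -/
def MStable {p m : Type*} (G : Matrix p m RF) : Prop := ∀ i j, RFstable (G i j)

/-- A real matrix viewed as a matrix over ℝ(s). -/
def toRF {p m : Type*} (M : Matrix p m ℝ) : Matrix p m RF := M.map (algebraMap ℝ RF)

/-- A real matrix viewed as a matrix over ℂ. -/
def toC {p m : Type*} (M : Matrix p m ℝ) : Matrix p m ℂ := M.map (fun x => (x : ℂ))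

/-- (N, Ñ, M, M̃, X, X̃, Y, Ỹ) is a doubly coprime factorization of G over RH∞. -/
def IsDCF {p m : Type*} [Fintype p] [Fintype m] [DecidableEq p] [DecidableEq m]
    (G : Matrix p m RF)
    (N : Matrix p m RF) (Ntil : Matrix p m RF)
    (M : Matrix m m RF) (Mtil : Matrix p p RF)
    (X : Matrix m p RF) (Xtil : Matrix m p RF)
    (Y : Matrix p p RF) (Ytil : Matrix m m RF) : Prop :=
  MStable N ∧ MStable Ntil ∧ MStable M ∧ MStable Mtil ∧
  MStable X ∧ MStable Xtil ∧ MStable Y ∧ MStable Ytil ∧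
  M.det ≠ 0 ∧ Mtil.det ≠ 0 ∧ G = N * M⁻¹ ∧ G = Mtil⁻¹ * Ntil ∧
  Matrix.fromBlocks Ytil (-Xtil) (-Ntil) Mtil * Matrix.fromBlocks M X N Y = 1

/-- Evaluation at infinity of a rational function : ratio of leading coefficients when
numerator and denominator degrees are equal, 0 otherwise (the limit, for proper f). -/
def evalInf (f : RF) : ℝ :=
  if f.num.degree = f.denom.degree then f.num.leadingCoeff / f.denom.leadingCoeff else 0

/-- Columnwise vectorization of an m × p matrix: index (j, i) holds the entry M i j,
i.e. vec(M)_{i+(j-1)m} = M_{ij}. -/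
def vecM {m p : Type*} (M : Matrix m p RF) : (p × m) → RF := fun x => M x.2 x.1

lemma RFcross {x : RF} {p q : Polynomial ℝ} (hq : q ≠ 0)
    (hx : x = algebraMap (Polynomial ℝ) RF p / algebraMap (Polynomial ℝ) RF q) :
    x.num * q = p * x.denom := by
  apply RatFunc.algebraMap_injective ℝ
  rw [_root_.map_mul, _root_.map_mul]
  rw [← div_eq_div_iff (RatFunc.algebraMap_ne_zero (RatFunc.denom_ne_zero x))
    (RatFunc.algebraMap_ne_zero hq), RatFunc.num_div_denom, hx]

lemma evalInf_zero : evalInf 0 = 0 := by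
  simp [evalInf, RatFunc.num_zero, RatFunc.denom_zero]

lemma RFproper_zero : RFproper 0 := by
  simp [RFproper, RatFunc.num_zero]

lemma RFproper_one : RFproper 1 := by
  simp [RFproper, RatFunc.num_one, RatFunc.denom_one]

lemma evalInf_one : evalInf 1 = 1 := by
  simp [evalInf, RatFunc.num_one, RatFunc.denom_one]

lemma RFproper_of {x : RF} {p q : Polynomial ℝ} (hq : q ≠ 0)
    (hdeg : p.degree ≤ q.degree)
    (hx : x = algebraMap (Polynomial ℝ) RF p / algebraMap (Polynomial ℝ) RF q) :
    RFproper x := by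
  have hc := RFcross hq hx
  rcases eq_or_ne x.num 0 with h0 | h0
  · rw [RFproper, h0, Polynomial.degree_zero]; exact bot_le
  have hp : p ≠ 0 := by
    intro h; rw [h, zero_mul] at hc
    exact h0 ((mul_eq_zero.mp hc).resolve_right hq)
  have hd := RatFunc.denom_ne_zero x
  have hdeg' := congrArg Polynomial.degree hc
  rw [Polynomial.degree_mul, Polynomial.degree_mul,
    Polynomial.degree_eq_natDegree h0, Polynomial.degree_eq_natDegree hq,
    Polynomial.degree_eq_natDegree hp, Polynomial.degree_eq_natDegree hd] at hdeg'
  have h1 : x.num.natDegree + q.natDegree = p.natDegree + x.denom.natDegree := by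
    exact_mod_cast hdeg'
  have h2 : p.natDegree ≤ q.natDegree := Polynomial.natDegree_le_natDegree hdeg
  rw [RFproper, Polynomial.degree_eq_natDegree h0, Polynomial.degree_eq_natDegree hd]
  exact_mod_cast by omega

lemma evalInf_of {x : RF} {p q : Polynomial ℝ} (hq : q ≠ 0)
    (hdeg : p.degree ≤ q.degree)
    (hx : x = algebraMap (Polynomial ℝ) RF p / algebraMap (Polynomial ℝ) RF q) :
    evalInf x = p.coeff q.natDegree / q.leadingCoeff := by
  have hc := RFcross hq hx
  rcases eq_or_ne x.num 0 with h0 | h0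
  · have hp : p = 0 := by
      rw [h0, zero_mul] at hc
      exact (mul_eq_zero.mp hc.symm).resolve_right (RatFunc.denom_ne_zero x)
    have hx0 : x = 0 := RatFunc.num_eq_zero_iff.mp h0
    rw [hx0, evalInf_zero, hp, Polynomial.coeff_zero, zero_div]
  have hp : p ≠ 0 := by
    intro h; rw [h, zero_mul] at hc
    exact h0 ((mul_eq_zero.mp hc).resolve_right hq)
  have hd := RatFunc.denom_ne_zero x
  have hdeg' := congrArg Polynomial.degree hc
  rw [Polynomial.degree_mul, Polynomial.degree_mul,
    Polynomial.degree_eq_natDegree h0, Polynomial.degree_eq_natDegree hq,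
    Polynomial.degree_eq_natDegree hp, Polynomial.degree_eq_natDegree hd] at hdeg'
  have h1 : x.num.natDegree + q.natDegree = p.natDegree + x.denom.natDegree := by
    exact_mod_cast hdeg'
  have h2 : p.natDegree ≤ q.natDegree := Polynomial.natDegree_le_natDegree hdeg
  have hlc := congrArg Polynomial.leadingCoeff hc
  rw [Polynomial.leadingCoeff_mul, Polynomial.leadingCoeff_mul] at hlc
  rcases eq_or_lt_of_le h2 with he | hlt
  · -- degrees equal
    have hnd : x.num.natDegree = x.denom.natDegree := by omega
    have hdegeq : x.num.degree = x.denom.degree := by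
      rw [Polynomial.degree_eq_natDegree h0, Polynomial.degree_eq_natDegree hd]
      exact_mod_cast hnd
    rw [evalInf, if_pos hdegeq, ← he, Polynomial.coeff_natDegree]
    rw [div_eq_div_iff (Polynomial.leadingCoeff_ne_zero.mpr hd)
      (Polynomial.leadingCoeff_ne_zero.mpr hq)]
    linarith [hlc]
  · -- strict: both sides zero
    have hnd : x.num.natDegree < x.denom.natDegree := by omega
    have hne : x.num.degree ≠ x.denom.degree := by
      rw [Polynomial.degree_eq_natDegree h0, Polynomial.degree_eq_natDegree hd]
      exact_mod_cast Nat.ne_of_lt hnd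
    rw [evalInf, if_neg hne, Polynomial.coeff_eq_zero_of_natDegree_lt hlt, zero_div]

lemma num_natDegree_le {f : RF} (hf : RFproper f) :
    f.num.natDegree ≤ f.denom.natDegree :=
  Polynomial.natDegree_le_natDegree hf

lemma add_rep (f g : RF) :
    f + g = algebraMap (Polynomial ℝ) RF (f.num * g.denom + g.num * f.denom)
      / algebraMap (Polynomial ℝ) RF (f.denom * g.denom) := by
  conv_lhs => rw [← RatFunc.num_div_denom f, ← RatFunc.num_div_denom g]
  rw [div_add_div _ _ (RatFunc.algebraMap_ne_zero (RatFunc.denom_ne_zero f))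
    (RatFunc.algebraMap_ne_zero (RatFunc.denom_ne_zero g))]
  push_cast [_root_.map_mul, _root_.map_add]
  ring_nf

lemma mul_rep (f g : RF) :
    f * g = algebraMap (Polynomial ℝ) RF (f.num * g.num)
      / algebraMap (Polynomial ℝ) RF (f.denom * g.denom) := by
  conv_lhs => rw [← RatFunc.num_div_denom f, ← RatFunc.num_div_denom g]
  rw [div_mul_div_comm, ← _root_.map_mul, ← _root_.map_mul]

lemma add_deg_le {f g : RF} (hf : RFproper f) (hg : RFproper g) :
    (f.num * g.denom + g.num * f.denom).degree ≤ (f.denom * g.denom).degree := by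
  refine le_trans (Polynomial.degree_add_le _ _) (max_le ?_ ?_) <;>
    rw [Polynomial.degree_mul, Polynomial.degree_mul]
  · exact add_le_add hf le_rfl
  · rw [add_comm (Polynomial.degree f.denom)]
    exact add_le_add hg le_rfl

lemma mul_deg_le {f g : RF} (hf : RFproper f) (hg : RFproper g) :
    (f.num * g.num).degree ≤ (f.denom * g.denom).degree := by
  rw [Polynomial.degree_mul, Polynomial.degree_mul]
  exact add_le_add hf hg

lemma RFproper_add {f g : RF} (hf : RFproper f) (hg : RFproper g) :
    RFproper (f + g) :=
  RFproper_of (mul_ne_zero (RatFunc.denom_ne_zero f) (RatFunc.denom_ne_zero g))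
    (add_deg_le hf hg) (add_rep f g)

lemma RFproper_mul {f g : RF} (hf : RFproper f) (hg : RFproper g) :
    RFproper (f * g) :=
  RFproper_of (mul_ne_zero (RatFunc.denom_ne_zero f) (RatFunc.denom_ne_zero g))
    (mul_deg_le hf hg) (mul_rep f g)

lemma RFproper_neg {f : RF} (hf : RFproper f) : RFproper (-f) := by
  refine RFproper_of (RatFunc.denom_ne_zero f) (q := f.denom) (p := -f.num) ?_ ?_
  · rw [Polynomial.degree_neg]; exact hf
  · rw [map_neg, neg_div, RatFunc.num_div_denom]

lemma evalInf_add {f g : RF} (hf : RFproper f) (hg : RFproper g) :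
    evalInf (f + g) = evalInf f + evalInf g := by
  have hdf := RatFunc.denom_ne_zero f
  have hdg := RatFunc.denom_ne_zero g
  rw [evalInf_of (mul_ne_zero hdf hdg) (add_deg_le hf hg) (add_rep f g),
    evalInf_of hdf hf (RatFunc.num_div_denom f).symm,
    evalInf_of hdg hg (RatFunc.num_div_denom g).symm,
    Polynomial.natDegree_mul hdf hdg, Polynomial.leadingCoeff_mul,
    Polynomial.coeff_add,
    Polynomial.coeff_mul_add_eq_of_natDegree_le (num_natDegree_le hf) le_rfl,
    add_comm f.denom.natDegree g.denom.natDegree,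
    Polynomial.coeff_mul_add_eq_of_natDegree_le (num_natDegree_le hg) le_rfl,
    Polynomial.coeff_natDegree, Polynomial.coeff_natDegree]
  have h1 : f.denom.leadingCoeff ≠ 0 := Polynomial.leadingCoeff_ne_zero.mpr hdf
  have h2 : g.denom.leadingCoeff ≠ 0 := Polynomial.leadingCoeff_ne_zero.mpr hdg
  field_simp

lemma evalInf_mul {f g : RF} (hf : RFproper f) (hg : RFproper g) :
    evalInf (f * g) = evalInf f * evalInf g := by
  have hdf := RatFunc.denom_ne_zero f
  have hdg := RatFunc.denom_ne_zero g
  rw [evalInf_of (mul_ne_zero hdf hdg) (mul_deg_le hf hg) (mul_rep f g),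
    evalInf_of hdf hf (RatFunc.num_div_denom f).symm,
    evalInf_of hdg hg (RatFunc.num_div_denom g).symm,
    Polynomial.natDegree_mul hdf hdg, Polynomial.leadingCoeff_mul,
    Polynomial.coeff_mul_add_eq_of_natDegree_le (num_natDegree_le hf) (num_natDegree_le hg)]
  rw [div_mul_div_comm]

def properSR : Subring RF where
  carrier := {f | RFproper f}
  one_mem' := RFproper_one
  zero_mem' := RFproper_zero
  add_mem' := RFproper_add
  mul_mem' := RFproper_mul
  neg_mem' := RFproper_neg

lemma mem_properSR {f : RF} : f ∈ properSR ↔ RFproper f := Iff.rfl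

def evalInfHom : properSR →+* ℝ where
  toFun f := evalInf f.1
  map_one' := evalInf_one
  map_zero' := evalInf_zero
  map_add' f g := evalInf_add f.2 g.2
  map_mul' f g := evalInf_mul f.2 g.2

lemma det_ne_zero_of_mapInf {n : ℕ} (A : Matrix (Fin n) (Fin n) RF)
    (hA : ∀ i j, RFproper (A i j)) (h : (A.map evalInf).det ≠ 0) : A.det ≠ 0 := by
  intro h0
  set A' : Matrix (Fin n) (Fin n) properSR := fun i j => ⟨A i j, hA i j⟩ with hA'
  have h1 : properSR.subtype.mapMatrix A' = A := by
    ext i j; rfl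
  have h2 : A'.det = 0 := by
    have := (properSR.subtype.map_det A').symm
    rw [h1, h0] at this
    have hv : (A'.det : RF) = 0 := this.symm
    exact_mod_cast hv
  have h3 : A.map evalInf = evalInfHom.mapMatrix A' := by
    ext i j; rfl
  rw [h3, ← evalInfHom.map_det, h2, map_zero] at h
  exact h rfl

lemma RF_ne_zero_of_evalInf {f : RF} (h : evalInf f ≠ 0) : f ≠ 0 := by
  intro h0; rw [h0, evalInf_zero] at h; exact h rfl

lemma RFproper_inv_mul {f g : RF} (_hf : RFproper f) (hg : RFproper g)
    (h0 : evalInf f ≠ 0) : RFproper (f⁻¹ * g) := by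
  have hf0 : f ≠ 0 := RF_ne_zero_of_evalInf h0
  have hdd : f.num.degree = f.denom.degree := by
    by_contra hne
    exact h0 (by rw [evalInf, if_neg hne])
  refine RFproper_of (p := f.denom * g.num) (q := f.num * g.denom)
    (mul_ne_zero (RatFunc.num_ne_zero hf0) (RatFunc.denom_ne_zero g)) ?_ ?_
  · rw [Polynomial.degree_mul, Polynomial.degree_mul, ← hdd]
    exact add_le_add le_rfl hg
  · conv_lhs => rw [← RatFunc.num_div_denom f, ← RatFunc.num_div_denom g]
    rw [inv_div, div_mul_div_comm, ← _root_.map_mul, ← _root_.map_mul]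

lemma kron_vec {a b c : Type*} [Fintype a] [Fintype c] [DecidableEq c]
    (A : Matrix a b RF) (R : Matrix c a RF) (j : b) (i : c) :
    ((Aᵀ ⊗ₖ (1 : Matrix c c RF)).mulVec (vecM R)) (j, i) = (R * A) i j := by
  simp only [Matrix.mulVec, dotProduct, Fintype.sum_prod_type,
    Matrix.kroneckerMap_apply, vecM, Matrix.one_apply, Matrix.transpose_apply,
    Matrix.mul_apply, mul_ite, mul_one, mul_zero, ite_mul, zero_mul]
  rw [Finset.sum_comm]
  simp [Finset.sum_ite_eq, mul_comm]

lemma sel_zero {ι : Type*} [Fintype ι] [DecidableEq ι] (d v : ι → RF)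
    (h : (((1 : Matrix ι ι RF) - Matrix.diagonal d).mulVec v) = 0) (x : ι)
    (hd : d x = 0) : v x = 0 := by
  have hx := congrFun h x
  rw [Matrix.sub_mulVec, Pi.sub_apply, Matrix.one_mulVec, Matrix.mulVec_diagonal,
    hd, zero_mul, sub_zero] at hx
  exact hx

/-- sparsity of the NRF pair (Φ, Γ) from vectorized model-matching
conditions on the Youla parameter. -/
theorem stmt_4 {p m : ℕ} (G : Matrix (Fin p) (Fin m) RF)
    (N Ntil : Matrix (Fin p) (Fin m) RF) (M Ytil : Matrix (Fin m) (Fin m) RF)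
    (Mtil Y : Matrix (Fin p) (Fin p) RF) (X Xtil : Matrix (Fin m) (Fin p) RF)
    (hDCF : IsDCF G N Ntil M Mtil X Xtil Y Ytil)
    -- binary structure matrices
    (𝒳 : Matrix (Fin m) (Fin p) ℝ) (h𝒳 : ∀ i j, 𝒳 i j = 0 ∨ 𝒳 i j = 1)
    (Yhat : Matrix (Fin m) (Fin m) ℝ) (hYhat : ∀ i j, Yhat i j = 0 ∨ Yhat i j = 1)
    (hYdiag : ∀ i, Yhat i i = 1)
    -- the sparsity selection matrices F_𝒳 = I - diag(𝒳), F_Ŷ = I - diag(Ŷ)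
    (F𝒳 : Matrix (Fin p × Fin m) (Fin p × Fin m) RF)
    (hF𝒳 : F𝒳 = 1 - Matrix.diagonal (fun x : Fin p × Fin m => algebraMap ℝ RF (𝒳 x.2 x.1)))
    (FY : Matrix (Fin m × Fin m) (Fin m × Fin m) RF)
    (hFY : FY = 1 - Matrix.diagonal (fun x : Fin m × Fin m => algebraMap ℝ RF (Yhat x.2 x.1)))
    (Q₀ Qhat : Matrix (Fin m) (Fin p) RF) (hQ₀ : MStable Q₀) (hQhat : MStable Qhat)
    -- (i) F_𝒳((M̃ᵀ ⊗ I)vec(Q₀) + vec(X̃)) = 0 and F_Ŷ((Ñᵀ ⊗ I)vec(Q₀) + vec(Ỹ)) = 0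
    (hi₁ : F𝒳.mulVec ((Mtilᵀ ⊗ₖ (1 : Matrix (Fin m) (Fin m) RF)).mulVec (vecM Q₀)
            + vecM Xtil) = 0)
    (hi₂ : FY.mulVec ((Ntilᵀ ⊗ₖ (1 : Matrix (Fin m) (Fin m) RF)).mulVec (vecM Q₀)
            + vecM Ytil) = 0)
    -- (ii) F_𝒳(M̃ᵀ ⊗ I)vec(Q̂) = 0 and F_Ŷ(Ñᵀ ⊗ I)vec(Q̂) = 0
    (hii₁ : F𝒳.mulVec ((Mtilᵀ ⊗ₖ (1 : Matrix (Fin m) (Fin m) RF)).mulVec (vecM Qhat)) = 0)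
    (hii₂ : FY.mulVec ((Ntilᵀ ⊗ₖ (1 : Matrix (Fin m) (Fin m) RF)).mulVec (vecM Qhat)) = 0)
    -- Q, V, W and the diagonal part of V
    (Q : Matrix (Fin m) (Fin p) RF) (hQ : Q = Q₀ + Qhat)
    (V : Matrix (Fin m) (Fin m) RF) (hV : V = Ytil + Q * Ntil)
    (W : Matrix (Fin m) (Fin p) RF) (hW : W = Xtil + Q * Mtil)
    (Vd : Matrix (Fin m) (Fin m) RF) (hVd : Vd = Matrix.diagonal V.diag)
    -- (iii) det V(∞) ≠ 0 and (iv) det V^diag(∞) ≠ 0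
    (hiii : (V.map evalInf).det ≠ 0)
    (hiv : (Vd.map evalInf).det ≠ 0)
    -- the NRF pair
    (Φ : Matrix (Fin m) (Fin m) RF) (hΦ : Φ = 1 - Vd⁻¹ * V)
    (Γ : Matrix (Fin m) (Fin p) RF) (hΓ : Γ = Vd⁻¹ * W) :
    V.det ≠ 0 ∧ Vd.det ≠ 0 ∧
    (∀ i j, RFproper (Φ i j)) ∧ (∀ i j, RFproper (Γ i j)) ∧
    (∀ i j, 𝒳 i j = 0 → Γ i j = 0) ∧
    (∀ i j, Yhat i j - (1 : Matrix (Fin m) (Fin m) ℝ) i j = 0 → Φ i j = 0) ∧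
    ((1 : Matrix (Fin m) (Fin m) RF) - Φ).det ≠ 0 ∧
    ((1 : Matrix (Fin m) (Fin m) RF) - Φ)⁻¹ * Γ = V⁻¹ * W := by

  obtain ⟨-, hNt, -, hMt, -, hXt, -, hYt, -, -, -, -, -⟩ := hDCF
  have hQp : ∀ i j, RFproper (Q i j) := by
    intro i j; rw [hQ]
    exact RFproper_add (hQ₀ i j).1 (hQhat i j).1
  have pv : ∀ i j, RFproper (V i j) := by
    intro i j
    rw [hV, Matrix.add_apply, Matrix.mul_apply]
    refine RFproper_add (hYt i j).1 (mem_properSR.mp (sum_mem fun k _ => ?_))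
    exact mul_mem (mem_properSR.mpr (hQp i k)) (mem_properSR.mpr (hNt k j).1)
  have pw : ∀ i j, RFproper (W i j) := by
    intro i j
    rw [hW, Matrix.add_apply, Matrix.mul_apply]
    refine RFproper_add (hXt i j).1 (mem_properSR.mp (sum_mem fun k _ => ?_))
    exact mul_mem (mem_properSR.mpr (hQp i k)) (mem_properSR.mpr (hMt k j).1)
  -- structural zeros of W and (off-diagonal) V
  have hW0 : ∀ i j, 𝒳 i j = 0 → W i j = 0 := by
    intro i j h0
    have hd : (algebraMap ℝ RF) (𝒳 (((j, i) : Fin p × Fin m)).2 ((j, i) : Fin p × Fin m).1) = 0 := by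
      simp only [h0, map_zero]
    have e1 := sel_zero _ _ (hF𝒳 ▸ hi₁) (j, i) hd
    have e2 := sel_zero _ _ (hF𝒳 ▸ hii₁) (j, i) hd
    rw [Pi.add_apply, kron_vec] at e1
    rw [kron_vec] at e2
    simp only [vecM] at e1
    rw [hW, hQ, Matrix.add_mul, Matrix.add_apply, Matrix.add_apply]
    linear_combination e1 + e2
  have hV0 : ∀ i j, Yhat i j = 0 → V i j = 0 := by
    intro i j h0
    have hd : (algebraMap ℝ RF) (Yhat (((j, i) : Fin m × Fin m)).2 ((j, i) : Fin m × Fin m).1) = 0 := by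
      simp only [h0, map_zero]
    have e1 := sel_zero _ _ (hFY ▸ hi₂) (j, i) hd
    have e2 := sel_zero _ _ (hFY ▸ hii₂) (j, i) hd
    rw [Pi.add_apply, kron_vec] at e1
    rw [kron_vec] at e2
    simp only [vecM] at e1
    rw [hV, hQ, Matrix.add_mul, Matrix.add_apply, Matrix.add_apply]
    linear_combination e1 + e2
  -- diagonal evaluation facts
  have hVdmap : Vd.map evalInf = Matrix.diagonal (fun i => evalInf (V i i)) := by
    rw [hVd, Matrix.diagonal_map evalInf_zero]
    rfl
  rw [hVdmap, Matrix.det_diagonal] at hiv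
  have hEi : ∀ i, evalInf (V i i) ≠ 0 := by
    intro i h
    exact hiv (Finset.prod_eq_zero (Finset.mem_univ i) h)
  have hVii : ∀ i, V i i ≠ 0 := fun i h => hEi i (by rw [h]; exact evalInf_zero)
  have hVdet : V.det ≠ 0 := det_ne_zero_of_mapInf V pv hiii
  have hVddet : Vd.det ≠ 0 := by
    rw [hVd, Matrix.det_diagonal]
    exact Finset.prod_ne_zero_iff.mpr fun i _ => hVii i
  have hVdu : IsUnit Vd.det := isUnit_iff_ne_zero.mpr hVddet
  have hVdinv : Vd⁻¹ = Matrix.diagonal (fun i => (V i i)⁻¹) := by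
    refine Matrix.inv_eq_right_inv ?_
    rw [hVd, Matrix.diagonal_mul_diagonal]
    have : (fun i => Matrix.diag V i * (V i i)⁻¹) = fun _ => (1 : RF) :=
      funext fun i => mul_inv_cancel₀ (hVii i)
    rw [this, Matrix.diagonal_one]
  have hΦe : ∀ i j, Φ i j = (1 : Matrix (Fin m) (Fin m) RF) i j - (V i i)⁻¹ * V i j := by
    intro i j
    rw [hΦ, Matrix.sub_apply, hVdinv, Matrix.diagonal_mul]
  have hΓe : ∀ i j, Γ i j = (V i i)⁻¹ * W i j := by
    intro i j
    rw [hΓ, hVdinv, Matrix.diagonal_mul]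
  have h1Φ : (1 : Matrix (Fin m) (Fin m) RF) - Φ = Vd⁻¹ * V := by
    rw [hΦ, sub_sub_cancel]
  refine ⟨hVdet, hVddet, ?_, ?_, ?_, ?_, ?_, ?_⟩
  · intro i j
    rw [hΦe]
    refine mem_properSR.mp (sub_mem ?_ ?_)
    · rw [Matrix.one_apply]
      split
      · exact RFproper_one
      · exact RFproper_zero
    · exact mem_properSR.mpr (RFproper_inv_mul (pv i i) (pv i j) (hEi i))
  · intro i j
    rw [hΓe]
    exact RFproper_inv_mul (pv i i) (pw i j) (hEi i)
  · intro i j h0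
    rw [hΓe, hW0 i j h0, mul_zero]
  · intro i j h0
    rw [hΦe]
    by_cases hij : i = j
    · subst hij
      rw [Matrix.one_apply_eq, inv_mul_cancel₀ (hVii i), sub_self]
    · have hY0 : Yhat i j = 0 := by
        rw [Matrix.one_apply_ne hij] at h0
        linarith
      rw [Matrix.one_apply_ne hij, hV0 i j hY0, mul_zero, sub_zero]
  · rw [h1Φ, Matrix.det_mul, Matrix.det_nonsing_inv, Ring.inverse_eq_inv]
    exact mul_ne_zero (inv_ne_zero hVddet) hVdet
  · rw [h1Φ, hΓ, Matrix.mul_inv_rev, Matrix.nonsing_inv_nonsing_inv Vd hVdu,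
      Matrix.mul_assoc, ← Matrix.mul_assoc Vd, Matrix.mul_nonsing_inv Vd hVdu,
      Matrix.one_mul]

end
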